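/- Let p > 0 with 2/p ∈ ℕ, ω ≥ 0, γ ∈ (0,1), φ ∈ [0,2π), and r > 0. Applying the Erdélyi–Kober fractional integral I^γ_{0+;p,η} with η = (1−1/p)ω + 2/p − 1 to 𝒥_{ω,φ}^{[p]} gives (I^γ_{0+;p,(1−1/p)ω+2/p−1})𝒥_{ω,φ}^{[p]}(r) = (p/r)^γ · 𝒥_{ω+γ,φ}^{[p]}(r). -/

import Mathlib

/-- The one-variable generalized Bessel function `𝒥_{ω,φ}^{[p]}(r)`, via its series. -/
noncomputable def calJ (p ω φ r : ℝ) : ℝ :=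
  ((2 / p) ^ 2 / Real.Gamma (1 / p) ^ 2) *
    ∑' k : ℕ, (p ^ (2 * k) * (-1 : ℝ) ^ k / Real.Gamma ((2 / p) * ((k : ℝ) + 1) + ω)) *
      (r / p) ^ (2 * (k : ℝ) + ω) *
      ∑ n ∈ Finset.range (k + 1),
        Real.Gamma ((2 * (n : ℝ) + 1) / p) * Real.Gamma ((2 * ((k - n : ℕ) : ℝ) + 1) / p) /
            ((Nat.factorial (2 * n) : ℝ) * (Nat.factorial (2 * (k - n)) : ℝ)) *
          (|Real.cos φ| ^ (4 * (n : ℝ) / p) * |Real.sin φ| ^ (4 * ((k - n : ℕ) : ℝ) / p))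

/-- The Erdélyi–Kober type fractional integral with base point `0`. -/
noncomputable def EKintegral (p η α : ℝ) (f : ℝ → ℝ) (r : ℝ) : ℝ :=
  (p / Real.Gamma α) *
    ∫ τ in (0 : ℝ)..1, τ ^ (p * (η + 1) - 1) * (1 - τ ^ p) ^ (α - 1) * f (τ * r)


open MeasureTheory Set Real
set_option maxHeartbeats 1000000

lemma betaCplx_eq {a b x : ℝ} (hx : 0 ≤ x) (hx1 : x ≤ 1) :
    (x:ℂ) ^ ((a:ℂ) - 1) * ((1:ℂ) - x) ^ ((b:ℂ) - 1)
      = ((x ^ (a-1) * (1-x) ^ (b-1) : ℝ) : ℂ) := by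
  rw [Complex.ofReal_mul, Complex.ofReal_cpow hx, Complex.ofReal_cpow (by linarith)]
  push_cast
  ring_nf

lemma betaKernel_integrableOn {a b : ℝ} (ha : 0 < a) (hb : 0 < b) :
    IntegrableOn (fun t : ℝ => t ^ (a - 1) * (1 - t) ^ (b - 1)) (Ioc 0 1) := by
  have hc := Complex.betaIntegral_convergent (u := (a:ℂ)) (v := (b:ℂ)) (by simpa) (by simpa)
  rw [intervalIntegrable_iff, uIoc_of_le (zero_le_one' ℝ)] at hc
  refine (hc.re).congr ?_
  refine (ae_restrict_iff' measurableSet_Ioc).2 (ae_of_all _ fun x hx => ?_)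
  simp only [betaCplx_eq (a := a) (b := b) hx.1.le hx.2]
  simp

lemma betaReal_eq {a b : ℝ} (ha : 0 < a) (hb : 0 < b) :
    ∫ t in Ioc (0:ℝ) 1, t ^ (a - 1) * (1 - t) ^ (b - 1)
      = Real.Gamma a * Real.Gamma b / Real.Gamma (a + b) := by
  have h := Complex.Gamma_mul_Gamma_eq_betaIntegral (s := (a:ℂ)) (t := (b:ℂ))
    (by simpa) (by simpa)
  have h2 : Complex.betaIntegral (a:ℂ) (b:ℂ)
      = ((∫ t in Ioc (0:ℝ) 1, t ^ (a - 1) * (1 - t) ^ (b - 1) : ℝ) : ℂ) := by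
    rw [Complex.betaIntegral, ← intervalIntegral.integral_of_le (zero_le_one' ℝ)]
    rw [intervalIntegral.integral_congr (g := fun x : ℝ =>
      ((x ^ (a-1) * (1-x) ^ (b-1) : ℝ) : ℂ)) ?_]
    · exact intervalIntegral.integral_ofReal
    · intro x hx
      rw [uIcc_of_le (zero_le_one' ℝ)] at hx
      exact betaCplx_eq hx.1 hx.2
  rw [h2, ← Complex.ofReal_add, Complex.Gamma_ofReal, Complex.Gamma_ofReal,
    Complex.Gamma_ofReal, ← Complex.ofReal_mul, ← Complex.ofReal_mul] at h
  have h3 := Complex.ofReal_injective h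
  have h4 : Real.Gamma (a + b) ≠ 0 := (Real.Gamma_pos_of_pos (by linarith)).ne'
  field_simp [h3]
  rw [h3]; ring

lemma betaReal_le_one {a b : ℝ} (ha : 1 ≤ a) (hb : 1 ≤ b) :
    ∫ t in Ioc (0:ℝ) 1, t ^ (a - 1) * (1 - t) ^ (b - 1) ≤ 1 := by
  have h := setIntegral_mono_on (betaKernel_integrableOn (by linarith) (by linarith))
    (f := fun t : ℝ => t ^ (a-1) * (1-t) ^ (b-1)) (integrableOn_const (by simp) (by simp))
    measurableSet_Ioc (g := fun _ => (1:ℝ)) ?_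
  · calc _ ≤ _ := h
    _ ≤ 1 := by simp
  · intro x hx
    have h1 : x ^ (a-1) ≤ 1 := Real.rpow_le_one hx.1.le hx.2 (by linarith)
    have h2 : (1-x) ^ (b-1) ≤ 1 := Real.rpow_le_one (by linarith [hx.2]) (by linarith [hx.1]) (by linarith)
    exact mul_le_one₀ h1 (Real.rpow_nonneg (by linarith [hx.2]) _) h2

lemma Gamma_mul_Gamma_le {a b : ℝ} (ha : 1 ≤ a) (hb : 1 ≤ b) :
    Real.Gamma a * Real.Gamma b ≤ Real.Gamma (a + b) := by
  have h := betaReal_eq (a := a) (b := b) (by linarith) (by linarith)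
  have h4 : 0 < Real.Gamma (a + b) := Real.Gamma_pos_of_pos (by linarith)
  have h5 := betaReal_le_one ha hb
  rw [h, div_le_one h4] at h5
  exact h5

lemma Gamma_le_two_Gamma_add_one {x : ℝ} (hx : 1/2 ≤ x) :
    Real.Gamma x ≤ 2 * Real.Gamma (x + 1) := by
  have hx0 : 0 < x := by linarith
  rw [Real.Gamma_add_one hx0.ne']
  nlinarith [Real.Gamma_pos_of_pos hx0]

lemma Gamma_mul_Gamma_le' {x y : ℝ} (hx : 1/2 ≤ x) (hy : 1/2 ≤ y) :
    Real.Gamma x * Real.Gamma y ≤ 4 * Real.Gamma (x + y + 2) := by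
  have h1 := Gamma_le_two_Gamma_add_one hx
  have h2 := Gamma_le_two_Gamma_add_one hy
  have h3 : Real.Gamma (x+1) * Real.Gamma (y+1) ≤ Real.Gamma (x + y + 2) := by
    have := Gamma_mul_Gamma_le (a := x+1) (b := y+1) (by linarith) (by linarith)
    calc Real.Gamma (x+1) * Real.Gamma (y+1) ≤ Real.Gamma ((x+1)+(y+1)) := this
    _ = Real.Gamma (x+y+2) := by ring_nf
  have p1 := Real.Gamma_pos_of_pos (show (0:ℝ) < x by linarith)
  have p2 := Real.Gamma_pos_of_pos (show (0:ℝ) < y+1 by linarith)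
  have p3 := Real.Gamma_pos_of_pos (show (0:ℝ) < x+1 by linarith)
  nlinarith [Real.Gamma_pos_of_pos (show (0:ℝ) < y by linarith)]

-- the image fact
lemma rpow_image_Ioo {p : ℝ} (hp : 0 < p) :
    (fun τ : ℝ => τ ^ p) '' Ioo 0 1 = Ioo 0 1 := by
  ext y
  constructor
  · rintro ⟨x, hx, rfl⟩
    exact ⟨Real.rpow_pos_of_pos hx.1 p, Real.rpow_lt_one hx.1.le hx.2 hp⟩
  · intro hy
    refine ⟨y ^ (1/p), ⟨Real.rpow_pos_of_pos hy.1 _, Real.rpow_lt_one hy.1.le hy.2 (by positivity)⟩, ?_⟩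
    show (y ^ (1/p)) ^ p = y
    rw [← Real.rpow_mul hy.1.le]
    field_simp
    simp

lemma rpow_hasDeriv {p : ℝ} (hp : 0 < p) : ∀ x ∈ Ioo (0:ℝ) 1,
    HasDerivWithinAt (fun τ : ℝ => τ ^ p) (p * x ^ (p-1)) (Ioo (0:ℝ) 1) x := fun x hx =>
  ((Real.hasDerivAt_rpow_const (p := p) (Or.inl hx.1.ne')).hasDerivWithinAt).congr_deriv (by ring)

lemma rpow_injOn {p : ℝ} (hp : 0 < p) : InjOn (fun τ : ℝ => τ ^ p) (Ioo 0 1) := by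
  refine StrictMonoOn.injOn (fun x hx y hy hxy => ?_)
  exact Real.rpow_lt_rpow hx.1.le hxy hp

lemma kernel_congr {p s γ : ℝ} (hp : 0 < p) : ∀ x ∈ Ioo (0:ℝ) 1,
    |p * x ^ (p-1)| • ((fun u : ℝ => u ^ (s - 1) * (1 - u) ^ (γ - 1)) ((fun τ : ℝ => τ ^ p) x))
      = p * (x ^ (p*s - 1) * (1 - x ^ p) ^ (γ - 1)) := by
  intro x hx
  have h1 : |p * x ^ (p-1)| = p * x ^ (p-1) :=
    abs_of_pos (mul_pos hp (Real.rpow_pos_of_pos hx.1 _))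
  have h2 : (x^p) ^ (s-1) = x ^ (p*(s-1)) := (Real.rpow_mul hx.1.le p (s-1)).symm
  have h3 : x ^ (p-1) * x ^ (p*(s-1)) = x ^ (p*s-1) := by
    rw [← Real.rpow_add hx.1]; ring_nf
  simp only [smul_eq_mul, h1, h2]
  rw [show p * x ^ (p-1) * (x ^ (p*(s-1)) * (1 - x^p) ^ (γ-1))
      = p * ((x ^ (p-1) * x ^ (p*(s-1))) * (1 - x^p) ^ (γ-1)) by ring, h3]

lemma kernel_integrableOn {p s γ : ℝ} (hp : 0 < p) (hs : 0 < s) (hγ : 0 < γ) :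
    IntegrableOn (fun τ : ℝ => τ ^ (p*s - 1) * (1 - τ ^ p) ^ (γ - 1)) (Ioc 0 1) := by
  rw [integrableOn_Ioc_iff_integrableOn_Ioo]
  have h := (integrableOn_image_iff_integrableOn_abs_deriv_smul measurableSet_Ioo
    (rpow_hasDeriv hp) (rpow_injOn hp)
    (fun u : ℝ => u ^ (s - 1) * (1 - u) ^ (γ - 1))).1
  rw [rpow_image_Ioo hp] at h
  have h2 := h ((betaKernel_integrableOn hs hγ).mono_set Ioo_subset_Ioc_self)
  have h3 : IntegrableOn (fun x : ℝ => p * (x ^ (p*s - 1) * (1 - x ^ p) ^ (γ - 1)))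
      (Ioo 0 1) := by
    refine h2.congr ((ae_restrict_iff' measurableSet_Ioo).2 (ae_of_all _ ?_))
    exact kernel_congr hp
  have h4 := h3.const_mul (1/p)
  refine h4.congr ((ae_restrict_iff' measurableSet_Ioo).2 (ae_of_all _ fun x hx => ?_))
  field_simp

lemma kernel_integral_eq {p s γ : ℝ} (hp : 0 < p) (hs : 0 < s) (hγ : 0 < γ) :
    ∫ τ in Ioc (0:ℝ) 1, τ ^ (p*s - 1) * (1 - τ ^ p) ^ (γ - 1)
      = Real.Gamma s * Real.Gamma γ / (p * Real.Gamma (s + γ)) := by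
  have h := integral_image_eq_integral_abs_deriv_smul measurableSet_Ioo
    (rpow_hasDeriv hp) (rpow_injOn hp) (fun u : ℝ => u ^ (s - 1) * (1 - u) ^ (γ - 1))
  rw [rpow_image_Ioo hp] at h
  rw [setIntegral_congr_fun measurableSet_Ioo (kernel_congr hp)] at h
  rw [MeasureTheory.integral_const_mul] at h
  have hbeta : ∫ u in Ioo (0:ℝ) 1, u ^ (s - 1) * (1 - u) ^ (γ - 1)
      = Real.Gamma s * Real.Gamma γ / Real.Gamma (s + γ) := by
    rw [← integral_Ioc_eq_integral_Ioo]; exact betaReal_eq hs hγ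
  rw [hbeta] at h
  rw [integral_Ioc_eq_integral_Ioo]
  field_simp at h ⊢
  linarith [h]

noncomputable def Ssum (p φ : ℝ) (k : ℕ) : ℝ :=
  ∑ n ∈ Finset.range (k + 1),
    Real.Gamma ((2 * (n : ℝ) + 1) / p) * Real.Gamma ((2 * ((k - n : ℕ) : ℝ) + 1) / p) /
        ((Nat.factorial (2 * n) : ℝ) * (Nat.factorial (2 * (k - n)) : ℝ)) *
      (|Real.cos φ| ^ (4 * (n : ℝ) / p) * |Real.sin φ| ^ (4 * ((k - n : ℕ) : ℝ) / p))

lemma Ssum_nonneg {p : ℝ} (hp : 0 < p) (φ : ℝ) (k : ℕ) : 0 ≤ Ssum p φ k := by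
  refine Finset.sum_nonneg fun n _ => ?_
  have g1 := Real.Gamma_pos_of_pos (show (0:ℝ) < (2 * (n : ℝ) + 1) / p by positivity)
  have g2 := Real.Gamma_pos_of_pos
    (show (0:ℝ) < (2 * ((k - n : ℕ) : ℝ) + 1) / p by positivity)
  positivity

lemma summable_g {r : ℝ} (hr : 0 ≤ r) :
    Summable (fun n : ℕ => (2*r)^(2*n) / ((2*n).factorial : ℝ)) := by
  refine Summable.of_nonneg_of_le (fun n => by positivity) (fun n => ?_)
    (Real.summable_pow_div_factorial ((2*r)^2))
  rw [pow_mul]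
  gcongr
  omega

lemma summable_T' {r : ℝ} (hr : 0 ≤ r) :
    Summable (fun k : ℕ => ∑ n ∈ Finset.range (k+1),
      ((2*r)^(2*n) / ((2*n).factorial : ℝ)) * ((2*r)^(2*(k-n)) / ((2*(k-n)).factorial : ℝ))) := by
  have hg := summable_g hr
  have habs : Summable (fun n : ℕ => ‖(2*r)^(2*n) / ((2*n).factorial : ℝ)‖) := by
    refine hg.congr fun n => ?_
    rw [Real.norm_eq_abs, abs_of_nonneg (by positivity)]
  exact (summable_norm_sum_mul_range_of_summable_norm habs habs).of_norm

lemma main_summable {p ω γ φ r : ℝ} (hp : 0 < p) (q : ℕ) (hq : (q:ℝ) = 2/p)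
    (hω : 0 ≤ ω) (hγ : 0 < γ) (hr : 0 < r) :
    Summable (fun k : ℕ =>
      r^(2*k) * Ssum p φ k / Real.Gamma (ω + γ + (2/p)*((k:ℝ)+1))) := by
  have hq0 : (0:ℝ) < (q:ℝ) := by rw [hq]; positivity
  have hq1 : (1:ℝ) ≤ (q:ℝ) := by exact_mod_cast Nat.cast_pos.1 hq0
  have hp2 : p ≤ 2 := by
    have h := hq ▸ hq1
    rw [le_div_iff₀ hp] at h; linarith
  set g : ℕ → ℝ := fun n => (2*r)^(2*n) / ((2*n).factorial : ℝ) with hgdef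
  refine (summable_nat_add_iff 1).1 ?_
  refine Summable.of_nonneg_of_le (fun k => ?_) (fun k => ?_)
    ((summable_nat_add_iff 1).2 ((summable_T' hr.le).mul_left (8*(q:ℝ)^2)))
  · have := Ssum_nonneg hp φ (k+1)
    have := Real.Gamma_pos_of_pos
      (show (0:ℝ) < ω + γ + (2/p)*(((k+1:ℕ):ℝ)+1) by positivity)
    positivity
  · -- the key bound at index j = k+1
    set j : ℕ := k + 1 with hj
    set K : ℝ := (q:ℝ) * ((j:ℝ)+1) with hK
    have hqp : (2:ℝ)/p = (q:ℝ) := hq.symm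
    have hj1 : (1:ℝ) ≤ (j:ℝ) := by exact_mod_cast Nat.one_le_iff_ne_zero.2 (by omega)
    have hK2 : 2 ≤ K := by rw [hK]; nlinarith
    have hKpos : 0 < K := by linarith
    have hGK := Real.Gamma_pos_of_pos hKpos
    have hmono : Real.Gamma K ≤ Real.Gamma (ω + γ + K) :=
      Real.Gamma_strictMonoOn_Ici.monotoneOn (mem_Ici.2 hK2)
        (mem_Ici.2 (by linarith)) (by linarith)
    have hGKω := Real.Gamma_pos_of_pos (show (0:ℝ) < ω + γ + K by linarith)
    have hS : Ssum p φ j ≤ 8*(q:ℝ)^2*((j:ℝ)+1)^2 * Real.Gamma K *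
        ∑ n ∈ Finset.range (j+1),
          1/(((2*n).factorial : ℝ) * ((2*(j-n)).factorial : ℝ)) := by
      rw [Finset.mul_sum]
      refine Finset.sum_le_sum fun n hn => ?_
      have hn' : n ≤ j := Nat.lt_succ_iff.1 (Finset.mem_range.1 hn)
      have hnm : (n:ℝ) + ((j-n:ℕ):ℝ) = (j:ℝ) := by
        push_cast [Nat.cast_sub hn']; ring
      have hx : (1:ℝ)/2 ≤ (2 * (n : ℝ) + 1) / p := by
        rw [div_le_div_iff₀ two_pos hp]
        nlinarith [Nat.cast_nonneg (α := ℝ) n]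
      have hy : (1:ℝ)/2 ≤ (2 * ((j-n:ℕ) : ℝ) + 1) / p := by
        rw [div_le_div_iff₀ two_pos hp]
        nlinarith [Nat.cast_nonneg (α := ℝ) (j-n)]
      have hGG := Gamma_mul_Gamma_le' hx hy
      have harg : (2 * (n : ℝ) + 1) / p + (2 * ((j-n:ℕ) : ℝ) + 1) / p + 2 = K + 2 := by
        have h1 : (2 * (n : ℝ) + 1) / p + (2 * ((j-n:ℕ) : ℝ) + 1) / p
            = (2/p) * ((n:ℝ) + ((j-n:ℕ):ℝ) + 1) := by field_simp; ring
        rw [h1, hnm, hqp, hK]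
      rw [harg] at hGG
      have hG2 : Real.Gamma (K+2) = (K+1)*(K*Real.Gamma K) := by
        rw [show K+2 = (K+1)+1 by ring, Real.Gamma_add_one (by linarith),
          Real.Gamma_add_one hKpos.ne']
      have hGG2 : Real.Gamma ((2 * (n : ℝ) + 1) / p) *
          Real.Gamma ((2 * ((j-n:ℕ) : ℝ) + 1) / p) ≤ 8*(q:ℝ)^2*((j:ℝ)+1)^2 * Real.Gamma K := by
        calc _ ≤ 4 * Real.Gamma (K+2) := hGG
        _ = (4*(K+1)*K)*Real.Gamma K := by rw [hG2]; ring
        _ ≤ (8*K^2)*Real.Gamma K := by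
            refine mul_le_mul_of_nonneg_right (by nlinarith) hGK.le
        _ = 8*(q:ℝ)^2*((j:ℝ)+1)^2 * Real.Gamma K := by rw [hK]; ring
      have hfact : (0:ℝ) < ((2*n).factorial : ℝ) * ((2*(j-n)).factorial : ℝ) := by positivity
      have hcs1 : |Real.cos φ| ^ (4 * (n : ℝ) / p) * |Real.sin φ| ^ (4 * ((j-n:ℕ) : ℝ) / p) ≤ 1 := by
        have h1 : |Real.cos φ| ^ (4 * (n : ℝ) / p) ≤ 1 :=
          Real.rpow_le_one (abs_nonneg _) (abs_cos_le_one φ) (by positivity)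
        have h2 : |Real.sin φ| ^ (4 * ((j-n:ℕ) : ℝ) / p) ≤ 1 :=
          Real.rpow_le_one (abs_nonneg _) (abs_sin_le_one φ) (by positivity)
        exact mul_le_one₀ h1 (Real.rpow_nonneg (abs_nonneg _) _) h2
      have hg1 := Real.Gamma_pos_of_pos (show (0:ℝ) < (2 * (n : ℝ) + 1) / p by positivity)
      have hg2 := Real.Gamma_pos_of_pos
        (show (0:ℝ) < (2 * ((j-n:ℕ) : ℝ) + 1) / p by positivity)
      calc Real.Gamma ((2 * (n : ℝ) + 1) / p) * Real.Gamma ((2 * ((j-n:ℕ) : ℝ) + 1) / p) /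
            (((2*n).factorial : ℝ) * ((2*(j-n)).factorial : ℝ)) *
            (|Real.cos φ| ^ (4 * (n : ℝ) / p) * |Real.sin φ| ^ (4 * ((j-n:ℕ) : ℝ) / p))
          ≤ Real.Gamma ((2 * (n : ℝ) + 1) / p) * Real.Gamma ((2 * ((j-n:ℕ) : ℝ) + 1) / p) /
            (((2*n).factorial : ℝ) * ((2*(j-n)).factorial : ℝ)) := by
            refine mul_le_of_le_one_right (by positivity) hcs1
        _ ≤ 8*(q:ℝ)^2*((j:ℝ)+1)^2 * Real.Gamma K *
            (1/(((2*n).factorial : ℝ) * ((2*(j-n)).factorial : ℝ))) := by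
            rw [div_eq_mul_one_div]
            exact mul_le_mul_of_nonneg_right hGG2 (by positivity)
    have hgj : ((j:ℝ)+1)^2 ≤ 4^j := by
      have h1 : (j:ℝ)+1 ≤ 2^j := by
        exact_mod_cast (Nat.lt_two_pow_self (n := j))
      calc ((j:ℝ)+1)^2 ≤ ((2:ℝ)^j)^2 := by nlinarith
      _ = 4^j := by rw [← pow_mul, show j*2 = 2*j by ring, pow_mul]; norm_num
    have hTnn : (0:ℝ) ≤ ∑ n ∈ Finset.range (j+1),
        1/(((2*n).factorial : ℝ) * ((2*(j-n)).factorial : ℝ)) := by positivity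
    have hqarg : ω + γ + (2/p)*((j:ℝ)+1) = ω + γ + K := by rw [hqp, hK]
    calc r^(2*j) * Ssum p φ j / Real.Gamma (ω + γ + (2/p)*((j:ℝ)+1))
        = r^(2*j) * Ssum p φ j / Real.Gamma (ω + γ + K) := by rw [hqarg]
      _ ≤ r^(2*j) * (8*(q:ℝ)^2*((j:ℝ)+1)^2 * Real.Gamma K *
            ∑ n ∈ Finset.range (j+1),
              1/(((2*n).factorial : ℝ) * ((2*(j-n)).factorial : ℝ))) / Real.Gamma (ω + γ + K) := by
            gcongr
      _ = 8*(q:ℝ)^2 * (((j:ℝ)+1)^2 * r^(2*j) *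
            (∑ n ∈ Finset.range (j+1),
              1/(((2*n).factorial : ℝ) * ((2*(j-n)).factorial : ℝ)))) *
            (Real.Gamma K / Real.Gamma (ω + γ + K)) := by ring
      _ ≤ 8*(q:ℝ)^2 * (((j:ℝ)+1)^2 * r^(2*j) *
            (∑ n ∈ Finset.range (j+1),
              1/(((2*n).factorial : ℝ) * ((2*(j-n)).factorial : ℝ)))) * 1 := by
            refine mul_le_mul_of_nonneg_left ((div_le_one hGKω).2 hmono) (by positivity)
      _ ≤ 8*(q:ℝ)^2 * ((4:ℝ)^j * r^(2*j) *
            (∑ n ∈ Finset.range (j+1),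
              1/(((2*n).factorial : ℝ) * ((2*(j-n)).factorial : ℝ)))) * 1 := by
            have : (0:ℝ) ≤ r^(2*j) := by positivity
            gcongr
      _ = 8*(q:ℝ)^2 * ∑ n ∈ Finset.range (j+1), g n * g (j-n) := by
            rw [mul_one]
            have hsum : (4:ℝ)^j * r^(2*j) * (∑ n ∈ Finset.range (j+1),
                1/(((2*n).factorial : ℝ) * ((2*(j-n)).factorial : ℝ)))
                = ∑ n ∈ Finset.range (j+1), g n * g (j-n) := by
              rw [Finset.mul_sum]
              refine Finset.sum_congr rfl fun n hn => ?_
              have hn' : n ≤ j := Nat.lt_succ_iff.1 (Finset.mem_range.1 hn)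
              simp only [hgdef]
              rw [div_mul_div_comm, ← pow_add,
              show 2*n + 2*(j-n) = 2*j by omega, mul_pow,
              show (2:ℝ)^(2*j) = 4^j by rw [pow_mul]; norm_num, mul_one_div]
            rw [hsum]

noncomputable def Fterm (p ω γ φ r : ℝ) (k : ℕ) (τ : ℝ) : ℝ :=
  (((2/p)^2 / Real.Gamma (1/p)^2) *
      ((p^(2*k) * (-1:ℝ)^k / Real.Gamma ((2/p)*((k:ℝ)+1)+ω)) *
        (r/p) ^ (2*(k:ℝ)+ω) * Ssum p φ k)) *
    (τ ^ (p * ((2/p)*((k:ℝ)+1)+ω) - 1) * (1 - τ^p) ^ (γ-1))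

lemma calJ_eq (p ω φ x : ℝ) : calJ p ω φ x
    = ((2/p)^2 / Real.Gamma (1/p)^2) *
      ∑' k : ℕ, (p^(2*k) * (-1:ℝ)^k / Real.Gamma ((2/p)*((k:ℝ)+1)+ω)) *
        (x/p) ^ (2*(k:ℝ)+ω) * Ssum p φ k := rfl

lemma spos {p ω : ℝ} (hp : 0 < p) (hω : 0 ≤ ω) (k : ℕ) :
    0 < (2/p)*((k:ℝ)+1)+ω := by positivity

lemma Fterm_eq {p ω γ φ r : ℝ} (hp : 0 < p) (hr : 0 < r) {τ : ℝ} (hτ : τ ∈ Ioc (0:ℝ) 1) :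
    τ ^ (p * ((1 - 1/p)*ω + 2/p - 1 + 1) - 1) * (1 - τ^p) ^ (γ-1) * calJ p ω φ (τ*r)
      = ∑' k, Fterm p ω γ φ r k τ := by
  rw [calJ_eq, ← tsum_mul_left, ← tsum_mul_left]
  refine tsum_congr fun k => ?_
  have hτ0 : 0 < τ := hτ.1
  have hsplit : ((τ*r)/p) ^ (2*(k:ℝ)+ω) = τ ^ (2*(k:ℝ)+ω) * (r/p) ^ (2*(k:ℝ)+ω) := by
    rw [show τ*r/p = τ*(r/p) by ring, Real.mul_rpow hτ0.le (by positivity)]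
  have h1 : τ ^ (p * ((1 - 1/p)*ω + 2/p - 1 + 1) - 1) * τ ^ (2*(k:ℝ)+ω)
      = τ ^ (p * ((2/p)*((k:ℝ)+1)+ω) - 1) := by
    rw [← Real.rpow_add hτ0]
    congr 1
    field_simp
    ring
  rw [hsplit, Fterm]
  calc τ ^ (p * ((1 - 1/p)*ω + 2/p - 1 + 1) - 1) * (1 - τ^p) ^ (γ-1) *
        (((2/p)^2 / Real.Gamma (1/p)^2) *
          ((p^(2*k) * (-1:ℝ)^k / Real.Gamma ((2/p)*((k:ℝ)+1)+ω)) *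
            (τ ^ (2*(k:ℝ)+ω) * (r/p) ^ (2*(k:ℝ)+ω)) * Ssum p φ k))
      = (τ ^ (p * ((1 - 1/p)*ω + 2/p - 1 + 1) - 1) * τ ^ (2*(k:ℝ)+ω)) *
        ((1 - τ^p) ^ (γ-1) * (((2/p)^2 / Real.Gamma (1/p)^2) *
          ((p^(2*k) * (-1:ℝ)^k / Real.Gamma ((2/p)*((k:ℝ)+1)+ω)) *
            (r/p) ^ (2*(k:ℝ)+ω) * Ssum p φ k))) := by ring
    _ = τ ^ (p * ((2/p)*((k:ℝ)+1)+ω) - 1) *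
        ((1 - τ^p) ^ (γ-1) * (((2/p)^2 / Real.Gamma (1/p)^2) *
          ((p^(2*k) * (-1:ℝ)^k / Real.Gamma ((2/p)*((k:ℝ)+1)+ω)) *
            (r/p) ^ (2*(k:ℝ)+ω) * Ssum p φ k))) := by rw [h1]
    _ = _ := by ring

lemma Fterm_integrableOn {p ω γ φ r : ℝ} (hp : 0 < p) (hω : 0 ≤ ω) (hγ : 0 < γ) (k : ℕ) :
    IntegrableOn (Fterm p ω γ φ r k) (Ioc 0 1) :=
  (kernel_integrableOn hp (spos hp hω k) hγ).const_mul _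

lemma Fterm_integral {p ω γ φ r : ℝ} (hp : 0 < p) (hω : 0 ≤ ω) (hγ : 0 < γ) (k : ℕ) :
    ∫ τ in Ioc (0:ℝ) 1, Fterm p ω γ φ r k τ
      = (((2/p)^2 / Real.Gamma (1/p)^2) *
          ((p^(2*k) * (-1:ℝ)^k / Real.Gamma ((2/p)*((k:ℝ)+1)+ω)) *
            (r/p) ^ (2*(k:ℝ)+ω) * Ssum p φ k)) *
        (Real.Gamma ((2/p)*((k:ℝ)+1)+ω) * Real.Gamma γ /
          (p * Real.Gamma ((2/p)*((k:ℝ)+1)+ω + γ))) := by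
  rw [show Fterm p ω γ φ r k = fun τ =>
    (((2/p)^2 / Real.Gamma (1/p)^2) *
      ((p^(2*k) * (-1:ℝ)^k / Real.Gamma ((2/p)*((k:ℝ)+1)+ω)) *
        (r/p) ^ (2*(k:ℝ)+ω) * Ssum p φ k)) *
    (τ ^ (p * ((2/p)*((k:ℝ)+1)+ω) - 1) * (1 - τ^p) ^ (γ-1)) from rfl]
  rw [MeasureTheory.integral_const_mul, kernel_integral_eq hp (spos hp hω k) hγ]

lemma Fterm_norm_integral {p ω γ φ r : ℝ} (hp : 0 < p) (hω : 0 ≤ ω) (hγ : 0 < γ)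
    (hr : 0 < r) (k : ℕ) :
    ∫ τ in Ioc (0:ℝ) 1, ‖Fterm p ω γ φ r k τ‖
      = ((2/p)^2 / Real.Gamma (1/p)^2 * Real.Gamma γ / p * (r/p)^ω) *
        (r^(2*k) * Ssum p φ k / Real.Gamma (ω + γ + (2/p)*((k:ℝ)+1))) := by
  have hΓs := Real.Gamma_pos_of_pos (spos hp hω k)
  have hC : (0:ℝ) < (2/p)^2 / Real.Gamma (1/p)^2 := by
    have := Real.Gamma_pos_of_pos (show (0:ℝ) < 1/p by positivity)
    positivity
  have habs : ∀ τ ∈ Ioc (0:ℝ) 1, ‖Fterm p ω γ φ r k τ‖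
      = (((2/p)^2 / Real.Gamma (1/p)^2) *
          ((p^(2*k) / Real.Gamma ((2/p)*((k:ℝ)+1)+ω)) *
            (r/p) ^ (2*(k:ℝ)+ω) * Ssum p φ k)) *
        (τ ^ (p * ((2/p)*((k:ℝ)+1)+ω) - 1) * (1 - τ^p) ^ (γ-1)) := by
    intro τ hτ
    have h1 : (0:ℝ) ≤ 1 - τ^p := by
      have := Real.rpow_le_one hτ.1.le hτ.2 hp.le
      linarith
    have hS := Ssum_nonneg hp φ k
    rw [Fterm, Real.norm_eq_abs, abs_mul, abs_mul, abs_mul, abs_mul, abs_mul, abs_div]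
    have e1 : |(2/p)^2| = (2/p)^2 := abs_of_nonneg (by positivity)
    have e2 : |Real.Gamma (1/p)^2| = Real.Gamma (1/p)^2 := abs_of_nonneg (sq_nonneg _)
    have e3 : |p^(2*k) * (-1:ℝ)^k / Real.Gamma ((2/p)*((k:ℝ)+1)+ω)|
        = p^(2*k) / Real.Gamma ((2/p)*((k:ℝ)+1)+ω) := by
      rw [abs_div, abs_mul, abs_pow, abs_pow, abs_neg, abs_one, one_pow, abs_of_pos hp,
        abs_of_pos hΓs, mul_one]
    rw [e1, e2, e3, abs_of_nonneg hS, abs_of_nonneg (Real.rpow_nonneg (by positivity : (0:ℝ) ≤ r/p) _),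
      abs_of_nonneg (Real.rpow_nonneg hτ.1.le _), abs_of_nonneg (Real.rpow_nonneg h1 _)]
  rw [setIntegral_congr_fun measurableSet_Ioc habs, MeasureTheory.integral_const_mul,
    kernel_integral_eq hp (spos hp hω k) hγ]
  have hpow : (r/p) ^ (2*(k:ℝ)+ω) = (r/p)^(2*k) * (r/p)^ω := by
    rw [Real.rpow_add (by positivity), ← Real.rpow_natCast (r/p) (2*k)]
    push_cast
    ring_nf
  have hpow2 : p^(2*k) * (r/p)^(2*k) = r^(2*k) := by
    rw [← mul_pow]
    congr 1
    field_simp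
  have hΓeq : Real.Gamma ((2/p)*((k:ℝ)+1)+ω + γ) = Real.Gamma (ω + γ + (2/p)*((k:ℝ)+1)) := by
    congr 1; ring
  rw [hpow, hΓeq]
  field_simp
  have hp0 : p ^ (k*2) * p⁻¹ ^ (k*2) = 1 := by rw [← mul_pow, mul_inv_cancel₀ hp.ne', one_pow]
  linear_combination (r ^ (k*2) * Ssum p φ k) * hp0

theorem EK_integral_calJ (p ω γ φ r : ℝ) (hp : 0 < p) (hq : ∃ q : ℕ, (q : ℝ) = 2 / p)
    (hω : 0 ≤ ω) (hγ : γ ∈ Set.Ioo (0 : ℝ) 1) (hφ : φ ∈ Set.Ico 0 (2 * Real.pi)) (hr : 0 < r) :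
    EKintegral p ((1 - 1 / p) * ω + 2 / p - 1) γ (calJ p ω φ) r
      = (p / r) ^ γ * calJ p (ω + γ) φ r := by
  obtain ⟨q, hq'⟩ := hq
  have hγ0 : 0 < γ := hγ.1
  have hΓγ : 0 < Real.Gamma γ := Real.Gamma_pos_of_pos hγ0
  have hsum : Summable (fun k => ∫ τ in Ioc (0:ℝ) 1, ‖Fterm p ω γ φ r k τ‖) := by
    refine ((main_summable (φ := φ) hp q hq' hω hγ0 hr).mul_left
      ((2/p)^2 / Real.Gamma (1/p)^2 * Real.Gamma γ / p * (r/p)^ω)).congr fun k => ?_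
    exact (Fterm_norm_integral hp hω hγ0 hr k).symm
  rw [EKintegral, intervalIntegral.integral_of_le (zero_le_one' ℝ),
    setIntegral_congr_fun measurableSet_Ioc (fun τ hτ => Fterm_eq hp hr hτ),
    ← MeasureTheory.integral_tsum_of_summable_integral_norm
      (fun k => Fterm_integrableOn hp hω hγ0 k) hsum,
    tsum_congr (fun k => Fterm_integral hp hω hγ0 k),
    calJ_eq p (ω+γ) φ r, ← tsum_mul_left, ← tsum_mul_left, ← tsum_mul_left]
  refine tsum_congr fun k => ?_
  have hΓs := Real.Gamma_pos_of_pos (spos hp hω k)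
  have hΓsγ := Real.Gamma_pos_of_pos (show (0:ℝ) < (2/p)*((k:ℝ)+1)+ω+γ by positivity)
  have hsplit : (r/p) ^ (2*(k:ℝ)+(ω+γ)) = (r/p) ^ (2*(k:ℝ)+ω) * (r/p) ^ γ := by
    rw [show 2*(k:ℝ)+(ω+γ) = (2*(k:ℝ)+ω)+γ by ring, Real.rpow_add (by positivity)]
  have hinv : (p/r) ^ γ = ((r/p) ^ γ)⁻¹ := by
    rw [← Real.inv_rpow (by positivity), inv_div]
  have hrpγ : (0:ℝ) < (r/p) ^ γ := Real.rpow_pos_of_pos (by positivity) _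
  rw [show (2/p)*((k:ℝ)+1)+(ω+γ) = (2/p)*((k:ℝ)+1)+ω+γ from by ring, hsplit, hinv]
  field_simp
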